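/- Let T be an n×n complex matrix which is a contraction, i.e. I − T*T is positive semidefinite. Then the 2n×2n block matrix [[T*, (I − T*T)^{1/2}], [−(I − T T*)^{1/2}, T]] is a special unitary matrix: it is unitary and has determinant 1. -/

import Mathlib

open Matrix Polynomial
open scoped ComplexOrder

variable {m : Type*} [Fintype m] [DecidableEq m]

private lemma mul_pow_comm' (T A B : Matrix m m ℂ) (h : T * A = B * T) :
    ∀ k : ℕ, T * A ^ k = B ^ k * T := by
  intro k
  induction k with
  | zero => simp
  | succ k ih =>
    rw [pow_succ, pow_succ, ← Matrix.mul_assoc, ih, Matrix.mul_assoc, h, ← Matrix.mul_assoc]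

private lemma mul_aeval_comm (T A B : Matrix m m ℂ) (h : T * A = B * T) (p : ℂ[X]) :
    T * aeval A p = aeval B p * T := by
  induction p using Polynomial.induction_on' with
  | add p q hp hq => simp [map_add, Matrix.mul_add, Matrix.add_mul, hp, hq]
  | monomial k c =>
    simp only [aeval_monomial, Algebra.algebraMap_eq_smul_one, smul_mul_assoc, one_mul,
      Matrix.mul_smul, Matrix.smul_mul, mul_pow_comm' T A B h k]

private lemma trace_aeval_eq (A B : Matrix m m ℂ)
    (h : ∀ k : ℕ, (A ^ k).trace = (B ^ k).trace) (p : ℂ[X]) :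
    (aeval A p).trace = (aeval B p).trace := by
  induction p using Polynomial.induction_on' with
  | add p q hp hq => simp [map_add, Matrix.trace_add, hp, hq]
  | monomial k c =>
    simp only [aeval_monomial, Algebra.algebraMap_eq_smul_one, smul_mul_assoc, one_mul,
      Matrix.trace_smul, h k]

private lemma conj_pow' (U V D : Matrix m m ℂ) (hUV : U * V = 1) (hVU : V * U = 1) (k : ℕ) :
    (U * D * V) ^ k = U * D ^ k * V := by
  induction k with
  | zero => simp [hUV]
  | succ k ih =>
    rw [pow_succ, ih, pow_succ]
    calc U * D ^ k * V * (U * D * V) = U * D ^ k * (V * U) * D * V := by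
          simp only [Matrix.mul_assoc]
    _ = U * (D ^ k * D) * V := by rw [hVU]; simp only [Matrix.mul_one, Matrix.mul_assoc]

private lemma aeval_conj' (U V D : Matrix m m ℂ) (hUV : U * V = 1) (hVU : V * U = 1)
    (p : ℂ[X]) : aeval (U * D * V) p = U * aeval D p * V := by
  induction p using Polynomial.induction_on' with
  | add p q hp hq => simp [map_add, Matrix.mul_add, Matrix.add_mul, hp, hq]
  | monomial k c =>
    simp only [aeval_monomial, Algebra.algebraMap_eq_smul_one, smul_mul_assoc, one_mul,
      Matrix.mul_smul, Matrix.smul_mul, conj_pow' U V D hUV hVU k]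

private lemma aeval_diagonal' (d : m → ℂ) (p : ℂ[X]) :
    aeval (Matrix.diagonal d) p = Matrix.diagonal (fun i => p.eval (d i)) := by
  induction p using Polynomial.induction_on' with
  | add p q hp hq =>
    simp [map_add, hp, hq, Matrix.diagonal_add]
  | monomial k c =>
    simp only [aeval_monomial, Algebra.algebraMap_eq_smul_one, smul_mul_assoc, one_mul,
      Matrix.diagonal_pow, eval_monomial, ← Matrix.diagonal_smul]
    exact congrArg Matrix.diagonal (funext fun i => by simp)

private noncomputable def psdSqrt {A : Matrix m m ℂ} (hA : A.PosSemidef) : Matrix m m ℂ :=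
  (hA.1.eigenvectorUnitary : Matrix m m ℂ) *
    Matrix.diagonal ((↑) ∘ Real.sqrt ∘ hA.1.eigenvalues) *
    (star hA.1.eigenvectorUnitary : Matrix m m ℂ)

open scoped MatrixOrder in
private lemma psd_eq_sqrt_of_sq_eq {A B : Matrix m m ℂ} (hB : B.PosSemidef) (hA : A.PosSemidef)
    (h : B ^ 2 = A) : B = psdSqrt hA := by
  have h0 : (0 : Matrix m m ℂ) ≤ A := Matrix.nonneg_iff_posSemidef.mpr hA
  have h1 : CFC.sqrt A = B :=
    CFC.sqrt_unique (by rw [← pow_two, h]) (Matrix.nonneg_iff_posSemidef.mpr hB)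
  rw [← h1, CFC.sqrt_eq_real_sqrt A h0, cfcₙ_eq_cfc (hf0 := Real.sqrt_zero), hA.1.cfc_eq]
  rfl

private lemma aeval_eq_sqrt (A : Matrix m m ℂ) (hA : A.PosSemidef) (p : ℂ[X])
    (hp : ∀ i, p.eval ((hA.1.eigenvalues i : ℝ) : ℂ) = ((Real.sqrt (hA.1.eigenvalues i) : ℝ) : ℂ)) :
    aeval A p = psdSqrt hA := by
  have hUV : (hA.1.eigenvectorUnitary : Matrix m m ℂ) * (star hA.1.eigenvectorUnitary : Matrix m m ℂ) = 1 :=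
    Matrix.mem_unitaryGroup_iff.mp hA.1.eigenvectorUnitary.2
  have hVU : (star hA.1.eigenvectorUnitary : Matrix m m ℂ) * (hA.1.eigenvectorUnitary : Matrix m m ℂ) = 1 :=
    Matrix.mem_unitaryGroup_iff'.mp hA.1.eigenvectorUnitary.2
  conv_lhs => rw [hA.1.spectral_theorem, Unitary.conjStarAlgAut_apply]
  rw [aeval_conj' _ _ _ hUV hVU, aeval_diagonal']
  have : psdSqrt hA = (hA.1.eigenvectorUnitary : Matrix m m ℂ) *
      Matrix.diagonal ((↑) ∘ Real.sqrt ∘ hA.1.eigenvalues) *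
      (star hA.1.eigenvectorUnitary : Matrix m m ℂ) := rfl
  rw [this]
  refine congrArg₂ _ (congrArg₂ _ rfl (congrArg Matrix.diagonal (funext fun i => ?_))) rfl
  simpa using hp i

/-- A Hermitian involution of size `2n` with zero trace has determinant `(-1)^n`. -/
private lemma det_of_involution (n : ℕ) (N : Matrix (Fin n ⊕ Fin n) (Fin n ⊕ Fin n) ℂ)
    (hH : N.IsHermitian) (h2 : N * N = 1) (htr : N.trace = 0) : N.det = (-1) ^ n := by
  classical
  set μ := hH.eigenvalues with hμ
  have hpm : ∀ i, μ i = 1 ∨ μ i = -1 := by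
    intro i
    set v := (⇑(hH.eigenvectorBasis i) : (Fin n ⊕ Fin n) → ℂ) with hv
    have hnz : v ≠ 0 := by
      intro h0
      have h1 := hH.eigenvectorBasis.orthonormal.1 i
      rw [show (hH.eigenvectorBasis i : EuclideanSpace ℂ (Fin n ⊕ Fin n)) = 0 from ?_] at h1
      · simp at h1
      · ext j; exact congrFun h0 j
    have hev := hH.mulVec_eigenvectorBasis i
    have h1 : (N * N) *ᵥ v = v := by rw [h2, Matrix.one_mulVec]
    rw [← Matrix.mulVec_mulVec, hev, Matrix.mulVec_smul, hev, smul_smul] at h1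
    obtain ⟨x, hx⟩ := Function.ne_iff.mp hnz
    have h3 : ((μ i * μ i : ℝ) : ℂ) * v x = v x := by
      have := congrFun h1 x
      simpa [Complex.real_smul] using this
    have h4 : ((μ i * μ i : ℝ) : ℂ) = 1 := by
      have h3' : ((μ i * μ i : ℝ) : ℂ) * v x = 1 * v x := by rw [h3, one_mul]
      exact mul_right_cancel₀ hx h3'
    have h5 : μ i * μ i = 1 := by exact_mod_cast h4
    have h6 : (μ i - 1) * (μ i + 1) = 0 := by ring_nf; linarith [h5]
    rcases mul_eq_zero.mp h6 with h | h
    · left; linarith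
    · right; linarith
  have hUV : (star hH.eigenvectorUnitary : Matrix (Fin n ⊕ Fin n) (Fin n ⊕ Fin n) ℂ) *
      (hH.eigenvectorUnitary : Matrix (Fin n ⊕ Fin n) (Fin n ⊕ Fin n) ℂ) = 1 :=
    Matrix.mem_unitaryGroup_iff'.mp hH.eigenvectorUnitary.2
  have htr2 : (∑ i, (μ i : ℂ)) = 0 := by
    have : N.trace = ∑ i, (μ i : ℂ) := by
      conv_lhs => rw [hH.spectral_theorem, Unitary.conjStarAlgAut_apply]
      rw [Matrix.trace_mul_cycle, hUV, Matrix.one_mul, Matrix.trace_diagonal]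
      rfl
    rw [← this, htr]
  set s := Finset.univ.filter (fun i => μ i = -1) with hs
  set t := Finset.univ.filter (fun i => ¬ μ i = -1) with ht
  have hcard : s.card + t.card = n + n := by
    rw [hs, ht, Finset.card_filter_add_card_filter_not]
    simp [Fintype.card_sum]
  have hsum : (s.card : ℂ) * (-1) + (t.card : ℂ) * 1 = 0 := by
    rw [← htr2, ← Finset.sum_filter_add_sum_filter_not Finset.univ (fun i => μ i = -1)]
    congr 1
    · rw [Finset.sum_congr rfl (fun i hi => ?_), Finset.sum_const, nsmul_eq_mul]
      have := (Finset.mem_filter.mp hi).2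
      rw [this]; push_cast; ring
    · rw [Finset.sum_congr rfl (fun i hi => ?_), Finset.sum_const, nsmul_eq_mul]
      have h1 := (Finset.mem_filter.mp hi).2
      rcases hpm i with h | h
      · rw [h]; norm_num
      · exact absurd h h1
  have hts : (t.card : ℂ) = (s.card : ℂ) := by linear_combination hsum
  have hts' : t.card = s.card := by exact_mod_cast hts
  have hscard : s.card = n := by omega
  have hdet : N.det = ∏ i, (μ i : ℂ) := hH.det_eq_prod_eigenvalues
  rw [hdet, ← Finset.prod_filter_mul_prod_filter_not Finset.univ (fun i => μ i = -1)]
  rw [Finset.prod_congr rfl (fun i hi => show (μ i : ℂ) = -1 by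
        rw [(Finset.mem_filter.mp hi).2]; norm_num),
      Finset.prod_const,
      Finset.prod_congr rfl (fun i hi => show (μ i : ℂ) = 1 by
        rcases hpm i with h | h
        · rw [h]; norm_num
        · exact absurd h (Finset.mem_filter.mp hi).2),
      Finset.prod_const, one_pow, mul_one, ← hs, hscard]

/-- If `T` is an `n × n` complex contraction matrix (i.e. `I - T*T` is positive semidefinite),
and `P`, `Q` are the positive semidefinite square roots of `I - T*T` and `I - T T*`
respectively, then the `2n × 2n` block matrix `[[T*, P], [-Q, T]]` is a special unitary
matrix: it is unitary and has determinant `1`. -/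
theorem contraction_block_special_unitary (n : ℕ) (T : Matrix (Fin n) (Fin n) ℂ)
    (hT : (1 - Tᴴ * T).PosSemidef)
    (P Q : Matrix (Fin n) (Fin n) ℂ)
    (hP : P.PosSemidef) (hP2 : P * P = 1 - Tᴴ * T)
    (hQ : Q.PosSemidef) (hQ2 : Q * Q = 1 - T * Tᴴ) :
    (Matrix.fromBlocks Tᴴ P (-Q) T)ᴴ * Matrix.fromBlocks Tᴴ P (-Q) T = 1 ∧
    Matrix.fromBlocks Tᴴ P (-Q) T * (Matrix.fromBlocks Tᴴ P (-Q) T)ᴴ = 1 ∧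
    (Matrix.fromBlocks Tᴴ P (-Q) T).det = 1 := by
  classical
  have hB : (1 - T * Tᴴ).PosSemidef := by
    rw [← hQ2, ← pow_two]; exact hQ.pow 2
  -- P and Q are the canonical square roots
  have hPs : P = psdSqrt hT := psd_eq_sqrt_of_sq_eq hP hT (by rw [pow_two, hP2])
  have hQs : Q = psdSqrt hB := psd_eq_sqrt_of_sq_eq hQ hB (by rw [pow_two, hQ2])
  -- interpolation polynomial for sqrt on the union of spectra
  set sA : Finset ℂ := Finset.univ.image (fun i => ((hT.1.eigenvalues i : ℝ) : ℂ)) with hsA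
  set sB : Finset ℂ := Finset.univ.image (fun i => ((hB.1.eigenvalues i : ℝ) : ℂ)) with hsB
  set s : Finset ℂ := sA ∪ sB with hsdef
  set f : ℂ → ℂ := fun z => ((Real.sqrt z.re : ℝ) : ℂ) with hf
  set p : ℂ[X] := Lagrange.interpolate s id f with hpdef
  have hnode : ∀ z ∈ s, p.eval z = f z := by
    intro z hz
    have := Lagrange.eval_interpolate_at_node f (Set.injOn_id _) hz
    exact this
  have hpA : ∀ i, p.eval ((hT.1.eigenvalues i : ℝ) : ℂ) = ((Real.sqrt (hT.1.eigenvalues i) : ℝ) : ℂ) := by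
    intro i
    rw [hnode _ (Finset.mem_union_left _ (Finset.mem_image_of_mem _ (Finset.mem_univ i)))]
    simp [hf]
  have hpB : ∀ i, p.eval ((hB.1.eigenvalues i : ℝ) : ℂ) = ((Real.sqrt (hB.1.eigenvalues i) : ℝ) : ℂ) := by
    intro i
    rw [hnode _ (Finset.mem_union_right _ (Finset.mem_image_of_mem _ (Finset.mem_univ i)))]
    simp [hf]
  have hPa : aeval (1 - Tᴴ * T) p = P := by rw [aeval_eq_sqrt _ hT p hpA, hPs]
  have hQa : aeval (1 - T * Tᴴ) p = Q := by rw [aeval_eq_sqrt _ hB p hpB, hQs]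
  -- intertwining relations
  have hTAB : T * (1 - Tᴴ * T) = (1 - T * Tᴴ) * T := by
    noncomm_ring
  have hTP : T * P = Q * T := by
    rw [← hPa, ← hQa]; exact mul_aeval_comm _ _ _ hTAB p
  have hPT : P * Tᴴ = Tᴴ * Q := by
    have := congrArg Matrix.conjTranspose hTP
    simpa [Matrix.conjTranspose_mul, hP.1.eq, hQ.1.eq] using this
  -- trace equality
  have hjtr : ∀ k : ℕ, ((Tᴴ * T) ^ k).trace = ((T * Tᴴ) ^ k).trace := by
    intro k
    cases k with
    | zero => rfl
    | succ j =>
      have hc : T * (Tᴴ * T) ^ j = (T * Tᴴ) ^ j * T :=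
        mul_pow_comm' T _ _ (by noncomm_ring) j
      calc ((Tᴴ * T) ^ (j + 1)).trace = (Tᴴ * (T * (Tᴴ * T) ^ j)).trace := by
            rw [pow_succ']; simp only [Matrix.mul_assoc]
      _ = (Tᴴ * ((T * Tᴴ) ^ j * T)).trace := by rw [hc]
      _ = (((T * Tᴴ) ^ j * T) * Tᴴ).trace := Matrix.trace_mul_comm _ _
      _ = ((T * Tᴴ) ^ (j + 1)).trace := by rw [pow_succ, Matrix.mul_assoc]
  have htrPQ : P.trace = Q.trace := by
    have hcomp : ∀ (X : Matrix (Fin n) (Fin n) ℂ), aeval X (p.comp (1 - Polynomial.X)) = aeval (1 - X) p := by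
      intro X
      rw [aeval_comp]
      congr 1
      simp
    have := trace_aeval_eq (Tᴴ * T) (T * Tᴴ) hjtr (p.comp (1 - Polynomial.X))
    rw [hcomp, hcomp, hPa, hQa] at this
    exact this
  -- unitarity
  set M : Matrix (Fin n ⊕ Fin n) (Fin n ⊕ Fin n) ℂ := Matrix.fromBlocks Tᴴ P (-Q) T with hM
  have hMH : Mᴴ = Matrix.fromBlocks T (-Q) P Tᴴ := by
    rw [hM, Matrix.fromBlocks_conjTranspose, Matrix.conjTranspose_conjTranspose,
      Matrix.conjTranspose_neg, hP.1.eq, hQ.1.eq]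
  have hMHM : Mᴴ * M = 1 := by
    rw [hMH, hM, Matrix.fromBlocks_multiply]
    rw [show T * Tᴴ + -Q * -Q = 1 by rw [neg_mul_neg, hQ2]; abel,
        show T * P + -Q * T = 0 by rw [Matrix.neg_mul, hTP]; abel,
        show P * Tᴴ + Tᴴ * -Q = 0 by rw [Matrix.mul_neg, hPT]; abel,
        show P * P + Tᴴ * T = 1 by rw [hP2]; abel]
    exact Matrix.fromBlocks_one
  have hMMH : M * Mᴴ = 1 := by
    rw [hMH, hM, Matrix.fromBlocks_multiply]
    rw [show Tᴴ * T + P * P = 1 by rw [hP2]; abel,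
        show Tᴴ * -Q + P * Tᴴ = 0 by rw [Matrix.mul_neg, hPT]; abel,
        show -Q * T + T * P = 0 by rw [Matrix.neg_mul, hTP]; abel,
        show -Q * -Q + T * Tᴴ = 1 by rw [neg_mul_neg, hQ2]; abel]
    exact Matrix.fromBlocks_one
  refine ⟨hMHM, hMMH, ?_⟩
  -- determinant
  set S : Matrix (Fin n ⊕ Fin n) (Fin n ⊕ Fin n) ℂ := Matrix.fromBlocks 0 1 1 0 with hS
  set N : Matrix (Fin n ⊕ Fin n) (Fin n ⊕ Fin n) ℂ := Matrix.fromBlocks P Tᴴ T (-Q) with hN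
  have hSH : S.IsHermitian := by
    rw [Matrix.IsHermitian, hS, Matrix.fromBlocks_conjTranspose]
    simp
  have hS2 : S * S = 1 := by
    rw [hS, Matrix.fromBlocks_multiply]
    simpa using Matrix.fromBlocks_one
  have hStr : S.trace = 0 := by
    simp [hS, Matrix.trace, Fintype.sum_sum_type]
  have hNH : N.IsHermitian := by
    rw [Matrix.IsHermitian, hN, Matrix.fromBlocks_conjTranspose, Matrix.conjTranspose_conjTranspose,
      Matrix.conjTranspose_neg, hP.1.eq, hQ.1.eq]
  have hN2 : N * N = 1 := by
    rw [hN, Matrix.fromBlocks_multiply]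
    rw [show P * P + Tᴴ * T = 1 by rw [hP2]; abel,
        show P * Tᴴ + Tᴴ * -Q = 0 by rw [Matrix.mul_neg, hPT]; abel,
        show T * P + -Q * T = 0 by rw [Matrix.neg_mul, hTP]; abel,
        show T * Tᴴ + -Q * -Q = 1 by rw [neg_mul_neg, hQ2]; abel]
    exact Matrix.fromBlocks_one
  have hNtr : N.trace = 0 := by
    have : N.trace = P.trace + (-Q).trace := by
      simp [hN, Matrix.trace, Fintype.sum_sum_type]
    rw [this, Matrix.trace_neg, htrPQ]; ring
  have hMS : M * S = N := by
    rw [hM, hS, hN, Matrix.fromBlocks_multiply]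
    congr 1 <;> simp
  have hdetN := det_of_involution n N hNH hN2 hNtr
  have hdetS := det_of_involution n S hSH hS2 hStr
  have hMNS : M = N * S := by
    rw [← hMS, Matrix.mul_assoc, hS2, Matrix.mul_one]
  rw [hMNS, Matrix.det_mul, hdetN, hdetS, ← pow_add]
  simp [pow_add, neg_one_sq, ← two_mul, pow_mul]
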